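/- Let n ∈ ℕ. The map K × A × U → SL_{n+1}(ℝ), (k, a, u) ↦ k·a·u, is a bijection, where K = SO(n+1), A is the group of diagonal matrices with positive diagonal entries and determinant 1, and U is the group of upper triangular matrices with all diagonal entries equal to 1. (Refined Iwasawa decomposition of SL_{n+1}(ℝ).) -/

import Mathlib

open Matrix Finset


lemma iwa_mul_diag {ι : Type*} [Fintype ι] [LinearOrder ι] {M N : Matrix ι ι ℝ} (hM : M.BlockTriangular id)
    (hN : N.BlockTriangular id) (i : ι) : (M * N) i i = M i i * N i i := by
  classical
  rw [Matrix.mul_apply, Finset.sum_eq_single i]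
  · intro j _ hj
    rcases lt_or_gt_of_ne hj with h | h
    · rw [hM h, zero_mul]
    · rw [hN h, mul_zero]
  · intro h; exact absurd (Finset.mem_univ i) h

lemma iwa_posdef {ι : Type*} [Fintype ι] [LinearOrder ι] [DecidableEq ι] {G : Matrix ι ι ℝ} (hG : IsUnit G.det) : (Gᵀ * G).PosDef := by
  classical
  refine Matrix.PosDef.of_dotProduct_mulVec_pos ?_ ?_
  · ext i j
    simp [Matrix.conjTranspose, Matrix.mul_apply, mul_comm]
  · intro x hx
    have hGx : G *ᵥ x ≠ 0 := fun h => hx <| by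
      have := Matrix.mulVec_injective_iff_isUnit.2 ((Matrix.isUnit_iff_isUnit_det G).2 hG)
      exact this (by simpa using h)
    have : star x ⬝ᵥ ((Gᵀ * G) *ᵥ x) = star (G *ᵥ x) ⬝ᵥ (G *ᵥ x) := by
      rw [← Matrix.mulVec_mulVec, Matrix.dotProduct_mulVec, Matrix.vecMul_transpose]
      simp [star]
    rw [this]
    exact Matrix.dotProduct_star_self_pos_iff.2 hGx

lemma iwa_posdef_conj {ι : Type*} [Fintype ι] [LinearOrder ι] {S B : Matrix ι ι ℝ} (hS : S.PosDef) [Invertible B] :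
    (B * S * Bᵀ).PosDef := by
  classical
  refine Matrix.PosDef.of_dotProduct_mulVec_pos ?_ ?_
  · have h : Sᵀ = S := by
      have := hS.isHermitian
      rwa [Matrix.IsHermitian, Matrix.conjTranspose_eq_transpose_of_trivial] at this
    rw [Matrix.IsHermitian, Matrix.conjTranspose_eq_transpose_of_trivial]
    rw [Matrix.transpose_mul, Matrix.transpose_mul, Matrix.transpose_transpose, h, mul_assoc]
  · intro x hx
    have hBx : Bᵀ *ᵥ x ≠ 0 := by
      intro h
      exact hx (Matrix.mulVec_injective_of_invertible Bᵀ (by simpa using h))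
    have : star x ⬝ᵥ ((B * S * Bᵀ) *ᵥ x) = star (Bᵀ *ᵥ x) ⬝ᵥ (S *ᵥ (Bᵀ *ᵥ x)) := by
      rw [← Matrix.mulVec_mulVec, ← Matrix.mulVec_mulVec, Matrix.dotProduct_mulVec (star x),
        ← Matrix.mulVec_transpose]
      simp [star]
    rw [this]
    exact hS.dotProduct_mulVec_pos hBx

-- an upper triangular orthogonal matrix with positive diagonal is the identity
lemma iwa_key {ι : Type*} [Fintype ι] [LinearOrder ι] [DecidableEq ι] {P : Matrix ι ι ℝ} (hP : P.BlockTriangular id)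
    (hd : ∀ i, 0 < P i i) (hO : Pᵀ * P = 1) : P = 1 := by
  classical
  have hdet : IsUnit P.det := by
    have : P.det * P.det = 1 := by
      have := congrArg Matrix.det hO
      simpa [Matrix.det_mul, mul_comm] using this
    exact IsUnit.of_mul_eq_one _ this
  haveI : Invertible P := P.invertibleOfIsUnitDet hdet
  have hinv : P⁻¹ = Pᵀ := by
    have : Pᵀ * P = 1 := hO
    calc P⁻¹ = 1 * P⁻¹ := (one_mul _).symm
    _ = Pᵀ * P * P⁻¹ := by rw [hO]
    _ = Pᵀ := by rw [mul_assoc, Matrix.mul_nonsing_inv _ hdet, mul_one]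
  have hPt : Pᵀ.BlockTriangular id := hinv ▸ Matrix.blockTriangular_inv_of_blockTriangular hP
  -- P is diagonal
  have hdiag : ∀ i j, i ≠ j → P i j = 0 := by
    intro i j hij
    rcases lt_or_gt_of_ne hij with h | h
    · exact hPt h
    · exact hP h
  have hsq : ∀ i, P i i * P i i = 1 := by
    intro i
    have := congrFun (congrFun hO i) i
    rw [Matrix.mul_apply] at this
    rw [Finset.sum_eq_single i] at this
    · simpa [Matrix.transpose_apply] using this
    · intro j _ hj
      simp [Matrix.transpose_apply, hdiag j i hj]
    · intro h; exact absurd (Finset.mem_univ i) h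
  have h1 : ∀ i, P i i = 1 := by
    intro i
    have h := hsq i
    nlinarith [hd i]
  ext i j
  by_cases hij : i = j
  · subst hij; simp [h1 i]
  · simp [hdiag i j hij, Matrix.one_apply_ne hij]

lemma iwa_T_exists {ι : Type*} [Fintype ι] [LinearOrder ι] [LocallyFiniteOrderBot ι] {S : Matrix ι ι ℝ} (hS : S.PosDef) :
    ∃ T : Matrix ι ι ℝ, T.BlockTriangular id ∧ Tᵀ * T = S := by
  have hdpos : ∀ i, 0 < LDL.diagEntries hS i := by
    have h1 : (LDL.lowerInv hS * S * (LDL.lowerInv hS)ᵀ).PosDef := iwa_posdef_conj hS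
    have h2 : LDL.diag hS = LDL.lowerInv hS * S * (LDL.lowerInv hS)ᵀ := by
      rw [LDL.diag_eq_lowerInv_conj, Matrix.conjTranspose_eq_transpose_of_trivial]
    rw [← h2] at h1
    exact Matrix.posDef_diagonal_iff.mp h1
  set L := LDL.lower hS with hL
  have hLt : L.BlockTriangular (OrderDual.toDual ∘ id) := by
    haveI := LDL.invertibleLowerInv hS
    have h0 : (LDL.lowerInv hS).BlockTriangular (OrderDual.toDual ∘ id) := fun i j hij =>
      LDL.lowerInv_triangular hS (by exact hij)
    exact Matrix.blockTriangular_inv_of_blockTriangular h0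
  refine ⟨Matrix.diagonal (fun i => Real.sqrt (LDL.diagEntries hS i)) * Lᵀ, ?_, ?_⟩
  · refine (Matrix.blockTriangular_diagonal _).mul ?_
    intro i j hij
    exact hLt (by simpa using hij)
  · have hsq : Matrix.diagonal (fun i => Real.sqrt (LDL.diagEntries hS i)) *
        Matrix.diagonal (fun i => Real.sqrt (LDL.diagEntries hS i)) = LDL.diag hS := by
      rw [Matrix.diagonal_mul_diagonal, LDL.diag]
      exact congrArg Matrix.diagonal (funext fun i => Real.mul_self_sqrt (hdpos i).le)
    calc (Matrix.diagonal (fun i => Real.sqrt (LDL.diagEntries hS i)) * Lᵀ)ᵀ *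
        (Matrix.diagonal (fun i => Real.sqrt (LDL.diagEntries hS i)) * Lᵀ)
        = L * (Matrix.diagonal (fun i => Real.sqrt (LDL.diagEntries hS i)) *
            Matrix.diagonal (fun i => Real.sqrt (LDL.diagEntries hS i))) * Lᵀ := by
          rw [Matrix.transpose_mul, Matrix.transpose_transpose, Matrix.diagonal_transpose]
          simp only [mul_assoc]
      _ = L * LDL.diag hS * Lᵀ := by rw [hsq, mul_assoc]
      _ = S := by
          have := LDL.lower_conj_diag hS
          rwa [Matrix.conjTranspose_eq_transpose_of_trivial] at this

-- inverse diagonal entry of an invertible upper triangular matrix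
lemma iwa_inv_diag {ι : Type*} [Fintype ι] [LinearOrder ι] [DecidableEq ι] {T : Matrix ι ι ℝ} (hT : T.BlockTriangular id)
    (hdet : IsUnit T.det) (i : ι) : T⁻¹ i i = (T i i)⁻¹ := by
  classical
  haveI : Invertible T := T.invertibleOfIsUnitDet hdet
  have hinvBT : (T⁻¹).BlockTriangular id := Matrix.blockTriangular_inv_of_blockTriangular hT
  have h1 : T i i * T⁻¹ i i = 1 := by
    have := congrFun (congrFun (Matrix.mul_nonsing_inv T hdet) i) i
    rw [← iwa_mul_diag hT hinvBT i] at *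
    simpa using this
  have hTi : T i i ≠ 0 := by
    intro h; rw [h, zero_mul] at h1; exact zero_ne_one h1
  field_simp at h1 ⊢
  linarith [h1]

set_option maxHeartbeats 1000000 in
theorem sl_real_refined_iwasawa (n : ℕ)
    (K A U : Set (Matrix.SpecialLinearGroup (Fin (n + 1)) ℝ))
    (hK : K = {k : Matrix.SpecialLinearGroup (Fin (n + 1)) ℝ |
                (k : Matrix (Fin (n + 1)) (Fin (n + 1)) ℝ)ᵀ
                  * (k : Matrix (Fin (n + 1)) (Fin (n + 1)) ℝ) = 1})
    (hA : A = {a : Matrix.SpecialLinearGroup (Fin (n + 1)) ℝ |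
                (∀ i j, i ≠ j → (a : Matrix (Fin (n + 1)) (Fin (n + 1)) ℝ) i j = 0) ∧
                ∀ i, 0 < (a : Matrix (Fin (n + 1)) (Fin (n + 1)) ℝ) i i})
    (hU : U = {u : Matrix.SpecialLinearGroup (Fin (n + 1)) ℝ |
                (∀ i, (u : Matrix (Fin (n + 1)) (Fin (n + 1)) ℝ) i i = 1) ∧
                ∀ i j, j < i → (u : Matrix (Fin (n + 1)) (Fin (n + 1)) ℝ) i j = 0}) :
    Function.Bijective
      (fun x : K × A × U =>
        ((x.1 : Matrix.SpecialLinearGroup (Fin (n + 1)) ℝ)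
          * (x.2.1 : Matrix.SpecialLinearGroup (Fin (n + 1)) ℝ)
          * (x.2.2 : Matrix.SpecialLinearGroup (Fin (n + 1)) ℝ))) := by
  classical
  subst hK hA hU
  let ι := Fin (n + 1)
  constructor
  · -- injectivity
    rintro ⟨⟨k1, hk1⟩, ⟨a1, ha1⟩, ⟨u1, hu1⟩⟩ ⟨⟨k2, hk2⟩, ⟨a2, ha2⟩, ⟨u2, hu2⟩⟩ hxy
    simp only [Set.mem_setOf_eq] at hk1 hk2 ha1 ha2 hu1 hu2
    simp only at hxy
    -- matrix level data
    have haBT1 : (a1 : Matrix ι ι ℝ).BlockTriangular id := fun i j hij => ha1.1 i j (ne_of_gt hij)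
    have haBT2 : (a2 : Matrix ι ι ℝ).BlockTriangular id := fun i j hij => ha2.1 i j (ne_of_gt hij)
    have huBT1 : (u1 : Matrix ι ι ℝ).BlockTriangular id := fun i j hij => hu1.2 i j hij
    have huBT2 : (u2 : Matrix ι ι ℝ).BlockTriangular id := fun i j hij => hu2.2 i j hij
    set T1 : Matrix ι ι ℝ := (a1 : Matrix ι ι ℝ) * (u1 : Matrix ι ι ℝ) with hT1
    set T2 : Matrix ι ι ℝ := (a2 : Matrix ι ι ℝ) * (u2 : Matrix ι ι ℝ) with hT2
    have hT1BT : T1.BlockTriangular id := haBT1.mul huBT1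
    have hT2BT : T2.BlockTriangular id := haBT2.mul huBT2
    have hT1d : ∀ i, 0 < T1 i i := fun i => by
      rw [hT1, iwa_mul_diag haBT1 huBT1, hu1.1 i, mul_one]; exact ha1.2 i
    have hT2d : ∀ i, 0 < T2 i i := fun i => by
      rw [hT2, iwa_mul_diag haBT2 huBT2, hu2.1 i, mul_one]; exact ha2.2 i
    have hT1det : IsUnit T1.det := by
      rw [Matrix.det_of_upperTriangular hT1BT]
      exact (Finset.prod_pos fun i _ => hT1d i).ne'.isUnit
    have hT2det : IsUnit T2.det := by
      rw [Matrix.det_of_upperTriangular hT2BT]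
      exact (Finset.prod_pos fun i _ => hT2d i).ne'.isUnit
    haveI : Invertible T1 := Matrix.invertibleOfIsUnitDet _ hT1det
    -- the common matrix
    have hGeq : (k1 : Matrix ι ι ℝ) * T1 = (k2 : Matrix ι ι ℝ) * T2 := by
      have := congrArg (fun g : Matrix.SpecialLinearGroup ι ℝ => (g : Matrix ι ι ℝ)) hxy
      simpa [hT1, hT2, mul_assoc] using this
    have hSeq : T1ᵀ * T1 = T2ᵀ * T2 := by
      have hone1 : (k1 : Matrix ι ι ℝ)ᵀ * ((k1 : Matrix ι ι ℝ) * T1) = T1 := by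
        rw [← mul_assoc, hk1, one_mul]
      have hone2 : (k2 : Matrix ι ι ℝ)ᵀ * ((k2 : Matrix ι ι ℝ) * T2) = T2 := by
        rw [← mul_assoc, hk2, one_mul]
      have h1 : ((k1 : Matrix ι ι ℝ) * T1)ᵀ * ((k1 : Matrix ι ι ℝ) * T1) = T1ᵀ * T1 := by
        rw [Matrix.transpose_mul, mul_assoc, hone1]
      have h2 : ((k2 : Matrix ι ι ℝ) * T2)ᵀ * ((k2 : Matrix ι ι ℝ) * T2) = T2ᵀ * T2 := by
        rw [Matrix.transpose_mul, mul_assoc, hone2]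
      rw [← h1, ← h2, hGeq]
    -- P := T2 * T1⁻¹ is orthogonal upper triangular with positive diagonal
    set P : Matrix ι ι ℝ := T2 * T1⁻¹ with hP
    have hPBT : P.BlockTriangular id :=
      hT2BT.mul (Matrix.blockTriangular_inv_of_blockTriangular hT1BT)
    have hPd : ∀ i, 0 < P i i := by
      intro i
      rw [hP, iwa_mul_diag hT2BT (Matrix.blockTriangular_inv_of_blockTriangular hT1BT),
        iwa_inv_diag hT1BT hT1det]
      exact mul_pos (hT2d i) (inv_pos.mpr (hT1d i))
    have hPO : Pᵀ * P = 1 := by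
      rw [hP, Matrix.transpose_mul, Matrix.transpose_nonsing_inv]
      calc T1ᵀ⁻¹ * T2ᵀ * (T2 * T1⁻¹) = T1ᵀ⁻¹ * (T2ᵀ * T2) * T1⁻¹ := by
            simp only [mul_assoc]
        _ = T1ᵀ⁻¹ * (T1ᵀ * T1) * T1⁻¹ := by rw [hSeq]
        _ = T1ᵀ⁻¹ * T1ᵀ * (T1 * T1⁻¹) := by simp only [mul_assoc]
        _ = 1 := by
            rw [Matrix.nonsing_inv_mul _ (by simpa using hT1det),
              Matrix.mul_nonsing_inv _ hT1det, one_mul]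
    have hP1 : P = 1 := iwa_key hPBT hPd hPO
    have hT12 : T2 = T1 := by
      have := congrArg (fun M => M * T1) hP1
      simpa [hP, mul_assoc, Matrix.nonsing_inv_mul _ hT1det,
        Matrix.nonsing_inv_mul_cancel_right] using this
    -- conclude componentwise
    have hk12 : k1 = k2 := by
      apply Subtype.ext
      have hG2 : (k1 : Matrix ι ι ℝ) * T1 = (k2 : Matrix ι ι ℝ) * T1 := by rw [hGeq, hT12]
      calc (k1 : Matrix ι ι ℝ) = (k1 : Matrix ι ι ℝ) * T1 * T1⁻¹ := by
            rw [mul_assoc, Matrix.mul_nonsing_inv _ hT1det, mul_one]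
        _ = (k2 : Matrix ι ι ℝ) * T1 * T1⁻¹ := by rw [hG2]
        _ = (k2 : Matrix ι ι ℝ) := by
            rw [mul_assoc, Matrix.mul_nonsing_inv _ hT1det, mul_one]
    have ha12 : a1 = a2 := by
      apply Subtype.ext
      ext i j
      by_cases hij : i = j
      · subst hij
        have e1 : (a1 : Matrix ι ι ℝ) i i = T1 i i := by
          rw [hT1, iwa_mul_diag haBT1 huBT1, hu1.1 i, mul_one]
        have e2 : (a2 : Matrix ι ι ℝ) i i = T2 i i := by
          rw [hT2, iwa_mul_diag haBT2 huBT2, hu2.1 i, mul_one]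
        rw [e1, e2, hT12]
      · rw [ha1.1 i j hij, ha2.1 i j hij]
    have hu12 : u1 = u2 := by
      have h := hxy
      rw [hk12, ha12] at h
      exact mul_left_cancel h
    simp [hk12, ha12, hu12]
  · -- surjectivity
    rintro g
    set G : Matrix ι ι ℝ := (g : Matrix ι ι ℝ) with hG
    have hGdet : G.det = 1 := g.prop
    have hS : (Gᵀ * G).PosDef := iwa_posdef (by rw [hGdet]; exact isUnit_one)
    obtain ⟨T, hTBT, hTS⟩ := iwa_T_exists hS
    have hTdet2 : T.det * T.det = 1 := by
      have := congrArg Matrix.det hTS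
      simp only [Matrix.det_mul, Matrix.det_transpose, hGdet, mul_one] at this
      exact this
    have hTdet : IsUnit T.det := IsUnit.of_mul_eq_one _ hTdet2
    haveI : Invertible T := Matrix.invertibleOfIsUnitDet _ hTdet
    have hTprod : T.det = ∏ i, T i i := Matrix.det_of_upperTriangular hTBT
    have hw : ∀ i, T i i ≠ 0 := by
      intro i hi
      apply hTdet.ne_zero
      rw [hTprod]
      exact Finset.prod_eq_zero (Finset.mem_univ i) hi
    set u : Matrix ι ι ℝ := Matrix.diagonal (fun i => (T i i)⁻¹) * T with hu
    set a : Matrix ι ι ℝ := Matrix.diagonal (fun i => |T i i|) with ha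
    set e : Matrix ι ι ℝ := Matrix.diagonal (fun i => |T i i| * (T i i)⁻¹) with he
    have huBT : u.BlockTriangular id := (Matrix.blockTriangular_diagonal _).mul hTBT
    have hud : ∀ i, u i i = 1 := by
      intro i
      rw [hu, iwa_mul_diag (Matrix.blockTriangular_diagonal _) hTBT,
        Matrix.diagonal_apply_eq, inv_mul_cancel₀ (hw i)]
    have hee : e * e = 1 := by
      rw [he, Matrix.diagonal_mul_diagonal]
      have : ∀ i, |T i i| * (T i i)⁻¹ * (|T i i| * (T i i)⁻¹) = 1 := by
        intro i
        rw [mul_mul_mul_comm, abs_mul_abs_self, ← mul_inv]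
        exact mul_inv_cancel₀ (mul_ne_zero (hw i) (hw i))
      rw [show (fun i => |T i i| * (T i i)⁻¹ * (|T i i| * (T i i)⁻¹)) = fun _ => (1:ℝ) from
        funext fun i => this i]
      exact Matrix.diagonal_one
    have hau : a * u = e * T := by
      rw [ha, hu, he, ← mul_assoc, Matrix.diagonal_mul_diagonal]
    set k : Matrix ι ι ℝ := G * T⁻¹ * e with hk
    have hkau : k * (a * u) = G := by
      rw [hau, hk]
      calc G * T⁻¹ * e * (e * T) = G * T⁻¹ * (e * e) * T := by simp only [mul_assoc]
        _ = G * (T⁻¹ * T) := by rw [hee, mul_one, mul_assoc]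
        _ = G := by rw [Matrix.nonsing_inv_mul _ hTdet, mul_one]
    have hkO : kᵀ * k = 1 := by
      have het : eᵀ = e := Matrix.diagonal_transpose _
      have hmid : (G * T⁻¹)ᵀ * (G * T⁻¹) = 1 := by
        rw [Matrix.transpose_mul, Matrix.transpose_nonsing_inv]
        calc Tᵀ⁻¹ * Gᵀ * (G * T⁻¹) = Tᵀ⁻¹ * (Gᵀ * G) * T⁻¹ := by simp only [mul_assoc]
          _ = Tᵀ⁻¹ * (Tᵀ * T) * T⁻¹ := by rw [hTS]
          _ = Tᵀ⁻¹ * Tᵀ * (T * T⁻¹) := by simp only [mul_assoc]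
          _ = 1 := by
              rw [Matrix.nonsing_inv_mul _ (by simpa using hTdet),
                Matrix.mul_nonsing_inv _ hTdet, one_mul]
      rw [hk, Matrix.transpose_mul, het]
      calc e * (G * T⁻¹)ᵀ * (G * T⁻¹ * e) = e * ((G * T⁻¹)ᵀ * (G * T⁻¹)) * e := by
            simp only [mul_assoc]
        _ = e * e := by rw [hmid, mul_one]
        _ = 1 := hee
    -- determinants
    clear_value u a e k
    have hudet : u.det = 1 := by
      rw [Matrix.det_of_upperTriangular huBT]
      simp [hud]
    have habs : |T.det| = 1 := by
      rcases mul_self_eq_one_iff.mp hTdet2 with h | h <;> rw [h] <;> simp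
    have hadet : a.det = 1 := by
      rw [ha, Matrix.det_diagonal, ← Finset.abs_prod, ← hTprod, habs]
    have hkdet : k.det = 1 := by
      have h := congrArg Matrix.det hkau
      rw [Matrix.det_mul, Matrix.det_mul, hadet, hudet, mul_one, mul_one, hGdet] at h
      exact h
    refine ⟨⟨⟨⟨k, hkdet⟩, hkO⟩, ⟨⟨a, hadet⟩, ?_, ?_⟩, ⟨⟨u, hudet⟩, ?_, ?_⟩⟩, ?_⟩
    · intro i j hij
      show a i j = 0
      rw [ha]; exact Matrix.diagonal_apply_ne _ hij
    · intro i
      show 0 < a i i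
      rw [ha, Matrix.diagonal_apply_eq]
      exact abs_pos.mpr (hw i)
    · intro i
      show u i i = 1
      exact hud i
    · intro i j hij
      show u i j = 0
      exact huBT hij
    · apply Subtype.ext
      show k * a * u = G
      rw [mul_assoc]
      exact hkau
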